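/- arXiv:2108.04849 — 4 statements merged into one kernel-verified Lean document; each statement's English description precedes it below -/
import Mathlib

section
/- The number of ranked labeled tree shapes compatible with a labeled binary perfect phylogeny (pi1, pi2), where pi1 has n1 leaves' worth of samples and pi2 has n2, equals binomial(n1+n2−2, n1−1) times the product of the numbers of ranked labeled tree shapes compatible with pi1 and with pi2. -/
/-- A labeled perfect phylogeny: a rooted binary tree whose leaves carry sets of
sample labels. -/
inductive LPP : Type
  | leaf : Finset ℕ → LPP
  | node : LPP → LPP → LPP

namespace LPP

/-- The set of sample labels of a labeled perfect phylogeny. -/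
def samples : LPP → Finset ℕ
  | leaf s => s
  | node l r => l.samples ∪ r.samples

/-- Validity: leaves carry nonempty label sets, and subtrees carry disjoint label sets. -/
def Valid : LPP → Prop
  | leaf s => s.Nonempty
  | node l r => l.Valid ∧ r.Valid ∧ Disjoint l.samples r.samples

/-- One elementary coarsening step: collapsing a cherry (merging the label sets of two
pendant leaf edges), anywhere in the tree; children are unordered. -/
inductive Step : LPP → LPP → Prop
  | cherry (a b : Finset ℕ) : Step (node (leaf a) (leaf b)) (leaf (a ∪ b))
  | swap (s t : LPP) : Step (node s t) (node t s)
  | left {t t' : LPP} (s : LPP) : Step t t' → Step (node t s) (node t' s)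
  | right {t t' : LPP} (s : LPP) : Step t t' → Step (node s t) (node s t')

/-- `π.Refines σ` iff `σ` is obtained from `π` by sequentially collapsing cherries. -/
def Refines (π σ : LPP) : Prop := Relation.ReflTransGen Step π σ

end LPP

/-- A ranked labeled tree: rooted binary tree with leaves labeled by samples and ranks
on internal nodes (ordered children; ranked labeled tree shapes are the quotient by
`RLTree.Equiv`). -/
inductive RLTree : Type
  | leaf : ℕ → RLTree
  | node : ℕ → RLTree → RLTree → RLTree

namespace RLTree

/-- Multiset of leaf labels. -/
def leafLabels : RLTree → Multiset ℕ
  | leaf x => {x}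
  | node _ l r => l.leafLabels + r.leafLabels

/-- Multiset of internal node ranks. -/
def ranks : RLTree → Multiset ℕ
  | leaf _ => 0
  | node k l r => k ::ₘ (l.ranks + r.ranks)

/-- Ranks strictly increase away from the root, starting above the bound `b`. -/
def IncreasingFrom : ℕ → RLTree → Prop
  | _, leaf _ => True
  | b, node k l r => b < k ∧ IncreasingFrom k l ∧ IncreasingFrom k r

/-- The labeled perfect phylogeny obtained by forgetting ranks and viewing each leaf as
a singleton block. -/
def toLPP : RLTree → LPP
  | leaf x => LPP.leaf {x}
  | node _ l r => LPP.node l.toLPP r.toLPP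

/-- `t.Valid s`: `t` is a ranked labeled tree whose leaves are labeled bijectively by
the sample set `s` and whose internal nodes carry the ranks `1, …, |s|-1`, each exactly
once, increasing from the root toward the leaves. -/
def Valid (t : RLTree) (s : Finset ℕ) : Prop :=
  t.leafLabels = s.val ∧ t.ranks = (Finset.Icc 1 (s.card - 1)).val ∧
    IncreasingFrom 0 t

/-- Equality of ranked labeled trees up to reordering of children. -/
inductive Equiv : RLTree → RLTree → Prop
  | leaf (x : ℕ) : Equiv (leaf x) (leaf x)
  | node {k : ℕ} {a b c d : RLTree} :
      Equiv a c → Equiv b d → Equiv (node k a b) (node k c d)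
  | swap {k : ℕ} {a b c d : RLTree} :
      Equiv a d → Equiv b c → Equiv (node k a b) (node k c d)

end RLTree

/-- `GLcount π` is the number of ranked labeled tree shapes compatible with the labeled
perfect phylogeny `π`. -/
noncomputable def GLcount (π : LPP) : ℕ :=
  Nat.card {q : Quot RLTree.Equiv //
    ∃ t : RLTree, Quot.mk _ t = q ∧ t.Valid π.samples ∧ LPP.Refines t.toLPP π}

section Aux

namespace LPP

theorem Step.samples_eq {π σ : LPP} (h : Step π σ) : π.samples = σ.samples := by
  induction h with
  | cherry a b => rfl
  | swap s t => exact Finset.union_comm _ _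
  | left s _ ih => simp [samples, ih]
  | right s _ ih => simp [samples, ih]

theorem Refines.samples_eq {π σ : LPP} (h : Refines π σ) : π.samples = σ.samples := by
  induction h with
  | refl => rfl
  | tail _ hs ih => rw [ih, hs.samples_eq]

theorem Valid.samples_nonempty : ∀ {π : LPP}, π.Valid → π.samples.Nonempty
  | leaf s, h => h
  | node l r, h => by
      obtain ⟨x, hx⟩ := Valid.samples_nonempty h.1
      exact ⟨x, Finset.mem_union_left _ hx⟩

theorem Refines.liftLeft {t t' : LPP} (h : Refines t t') (s : LPP) :
    Refines (node t s) (node t' s) :=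
  Relation.ReflTransGen.lift (fun x => node x s) (fun _ _ hs => Step.left s hs) _ _ h

theorem Refines.liftRight {t t' : LPP} (h : Refines t t') (s : LPP) :
    Refines (node s t) (node s t') :=
  Relation.ReflTransGen.lift (fun x => node s x) (fun _ _ hs => Step.right s hs) _ _ h

theorem refines_node {a b a' b' : LPP} (h1 : Refines a a') (h2 : Refines b b') :
    Refines (node a b) (node a' b') :=
  (h1.liftLeft b).trans (h2.liftRight a')

theorem refines_node_inv {t π₁ π₂ : LPP} (h : Refines t (node π₁ π₂)) :
    ∃ a b, t = node a b ∧
      ((Refines a π₁ ∧ Refines b π₂) ∨ (Refines a π₂ ∧ Refines b π₁)) := by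
  induction h using Relation.ReflTransGen.head_induction_on with
  | refl => exact ⟨π₁, π₂, rfl, Or.inl ⟨.refl, .refl⟩⟩
  | head hstep _ ih =>
    obtain ⟨a, b, heq, hor⟩ := ih
    subst heq
    cases hstep with
    | swap s t0 =>
      rcases hor with ⟨h1, h2⟩ | ⟨h1, h2⟩
      · exact ⟨b, a, rfl, Or.inr ⟨h2, h1⟩⟩
      · exact ⟨b, a, rfl, Or.inl ⟨h2, h1⟩⟩
    | left s h' =>
      rcases hor with ⟨h1, h2⟩ | ⟨h1, h2⟩
      · exact ⟨_, b, rfl, Or.inl ⟨Relation.ReflTransGen.head h' h1, h2⟩⟩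
      · exact ⟨_, b, rfl, Or.inr ⟨Relation.ReflTransGen.head h' h1, h2⟩⟩
    | right s h' =>
      rcases hor with ⟨h1, h2⟩ | ⟨h1, h2⟩
      · exact ⟨a, _, rfl, Or.inl ⟨h1, Relation.ReflTransGen.head h' h2⟩⟩
      · exact ⟨a, _, rfl, Or.inr ⟨h1, Relation.ReflTransGen.head h' h2⟩⟩

end LPP

end Aux

namespace RLTree

theorem toLPP_samples (t : RLTree) : t.toLPP.samples = t.leafLabels.toFinset := by
  induction t with
  | leaf x => simp [toLPP, leafLabels, LPP.samples]
  | node k l r ihl ihr => simp [toLPP, leafLabels, LPP.samples, ihl, ihr]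

theorem Equiv.rfl : ∀ t : RLTree, Equiv t t := fun t => by
  induction t with
  | leaf x => exact .leaf x
  | node k l r ihl ihr => exact .node ihl ihr

theorem Equiv.symm : ∀ {a b : RLTree}, Equiv a b → Equiv b a := by
  intro a b h
  induction h with
  | leaf x => exact .leaf x
  | node _ _ ih1 ih2 => exact .node ih1 ih2
  | swap _ _ ih1 ih2 => exact .swap ih2 ih1

theorem Equiv.trans : ∀ {a b c : RLTree}, Equiv a b → Equiv b c → Equiv a c := by
  intro a b c h1
  induction h1 generalizing c with
  | leaf x => exact fun h2 => h2
  | node h1a h1b iha ihb =>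
    intro h2
    cases h2 with
    | node h2a h2b => exact .node (iha h2a) (ihb h2b)
    | swap h2a h2b => exact .swap (iha h2a) (ihb h2b)
  | swap h1a h1b iha ihb =>
    intro h2
    cases h2 with
    | node h2a h2b => exact .swap (iha h2b) (ihb h2a)
    | swap h2a h2b => exact .node (iha h2b) (ihb h2a)

theorem equivalence_equiv : Equivalence Equiv :=
  ⟨Equiv.rfl, Equiv.symm, Equiv.trans⟩

theorem quot_mk_eq_iff {t t' : RLTree} :
    Quot.mk Equiv t = Quot.mk Equiv t' ↔ Equiv t t' :=
  ⟨fun h => (Equivalence.eqvGen_iff equivalence_equiv).mp (Quot.eqvGen_exact h),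
   Quot.sound⟩

theorem Equiv.leafLabels_eq {t t' : RLTree} (h : Equiv t t') :
    t.leafLabels = t'.leafLabels := by
  induction h with
  | leaf x => rfl
  | node _ _ ih1 ih2 => simp [leafLabels, ih1, ih2]
  | swap _ _ ih1 ih2 => simp [leafLabels, ih1, ih2, add_comm]

theorem Equiv.ranks_eq {t t' : RLTree} (h : Equiv t t') : t.ranks = t'.ranks := by
  induction h with
  | leaf x => rfl
  | node _ _ ih1 ih2 => simp [ranks, ih1, ih2]
  | swap _ _ ih1 ih2 => simp [ranks, ih1, ih2, add_comm]

theorem Equiv.toLPP_refines {t t' : RLTree} (h : Equiv t t') :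
    LPP.Refines t.toLPP t'.toLPP := by
  induction h with
  | leaf x => exact .refl
  | node _ _ ih1 ih2 => exact LPP.refines_node ih1 ih2
  | swap _ _ ih1 ih2 =>
    exact (LPP.refines_node ih1 ih2).trans
      (Relation.ReflTransGen.single (LPP.Step.swap _ _))

/-- Apply a function to all ranks. -/
def relabel (f : ℕ → ℕ) : RLTree → RLTree
  | leaf x => leaf x
  | node k l r => node (f k) (relabel f l) (relabel f r)

@[simp] theorem relabel_leafLabels (f : ℕ → ℕ) (t : RLTree) :
    (relabel f t).leafLabels = t.leafLabels := by
  induction t with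
  | leaf x => rfl
  | node k l r ihl ihr => simp [relabel, leafLabels, ihl, ihr]

@[simp] theorem relabel_ranks (f : ℕ → ℕ) (t : RLTree) :
    (relabel f t).ranks = t.ranks.map f := by
  induction t with
  | leaf x => rfl
  | node k l r ihl ihr => simp [relabel, ranks, ihl, ihr]

@[simp] theorem relabel_toLPP (f : ℕ → ℕ) (t : RLTree) :
    (relabel f t).toLPP = t.toLPP := by
  induction t with
  | leaf x => rfl
  | node k l r ihl ihr => simp [relabel, toLPP, ihl, ihr]

theorem Equiv.relabel (f : ℕ → ℕ) {t t' : RLTree} (h : Equiv t t') :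
    Equiv (RLTree.relabel f t) (RLTree.relabel f t') := by
  induction h with
  | leaf x => exact .leaf x
  | node _ _ ih1 ih2 => exact .node ih1 ih2
  | swap _ _ ih1 ih2 => exact .swap ih1 ih2

theorem relabel_relabel (f g : ℕ → ℕ) (t : RLTree) :
    relabel f (relabel g t) = relabel (fun x => f (g x)) t := by
  induction t with
  | leaf x => rfl
  | node k l r ihl ihr => simp [relabel, ihl, ihr]

theorem relabel_eq_self {f : ℕ → ℕ} : ∀ {t : RLTree},
    (∀ x ∈ t.ranks, f x = x) → relabel f t = t
  | leaf x, _ => rfl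
  | node k l r, h => by
    have hk : f k = k := h k (by simp [ranks])
    have hl := relabel_eq_self (t := l) fun x hx =>
      h x (by simp [ranks, hx])
    have hr := relabel_eq_self (t := r) fun x hx =>
      h x (by simp [ranks, hx])
    simp [relabel, hk, hl, hr]

theorem relabel_relabel_eq_self {f g : ℕ → ℕ} {t : RLTree}
    (h : ∀ x ∈ t.ranks, f (g x) = x) : relabel f (relabel g t) = t := by
  rw [relabel_relabel]
  exact relabel_eq_self h

theorem increasingFrom_relabel {f : ℕ → ℕ} : ∀ {t : RLTree} {b b' : ℕ},
    (∀ x ∈ t.ranks, ∀ y ∈ t.ranks, x < y → f x < f y) →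
    (∀ x ∈ t.ranks, b < x → b' < f x) →
    IncreasingFrom b t → IncreasingFrom b' (relabel f t)
  | leaf x, _, _, _, _, _ => trivial
  | node k l r, b, b', hf, hb, h => by
    obtain ⟨h1, h2, h3⟩ := h
    have hkmem : k ∈ (node k l r).ranks := by simp [ranks]
    have hlsub : ∀ x ∈ l.ranks, x ∈ (node k l r).ranks := fun x hx => by
      simp [ranks, hx]
    have hrsub : ∀ x ∈ r.ranks, x ∈ (node k l r).ranks := fun x hx => by
      simp [ranks, hx]
    refine ⟨hb k hkmem h1, ?_, ?_⟩
    · exact increasingFrom_relabel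
        (fun x hx y hy => hf x (hlsub x hx) y (hlsub y hy))
        (fun x hx hk => hf k hkmem x (hlsub x hx) hk) h2
    · exact increasingFrom_relabel
        (fun x hx y hy => hf x (hrsub x hx) y (hrsub y hy))
        (fun x hx hk => hf k hkmem x (hrsub x hx) hk) h3

theorem increasingFrom_lt_ranks : ∀ {t : RLTree} {b : ℕ},
    IncreasingFrom b t → ∀ x ∈ t.ranks, b < x
  | leaf _, _, _, x, hx => by simp [ranks] at hx
  | node k l r, b, h, x, hx => by
    obtain ⟨h1, h2, h3⟩ := h
    rcases (by simpa [ranks] using hx : x = k ∨ x ∈ l.ranks ∨ x ∈ r.ranks) with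
      rfl | hx | hx
    · exact h1
    · exact h1.trans (increasingFrom_lt_ranks h2 x hx)
    · exact h1.trans (increasingFrom_lt_ranks h3 x hx)

theorem card_leafLabels : ∀ t : RLTree,
    Multiset.card t.leafLabels = Multiset.card t.ranks + 1
  | leaf x => by simp [leafLabels, ranks]
  | node k l r => by
    have hl := card_leafLabels l
    have hr := card_leafLabels r
    simp [leafLabels, ranks] at *
    omega

theorem equiv_node_inv {k k' : ℕ} {a b c d : RLTree}
    (h : Equiv (node k a b) (node k' c d)) :
    k = k' ∧ ((Equiv a c ∧ Equiv b d) ∨ (Equiv a d ∧ Equiv b c)) := by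
  cases h with
  | node h1 h2 => exact ⟨rfl, Or.inl ⟨h1, h2⟩⟩
  | swap h1 h2 => exact ⟨rfl, Or.inr ⟨h1, h2⟩⟩

end RLTree

/-- The `i`-th smallest element of `s` (1-indexed). -/
noncomputable def nth (s : Finset ℕ) (i : ℕ) : ℕ :=
  if h : i - 1 < s.card then ((s.orderIsoOfFin rfl) ⟨i - 1, h⟩ : ℕ) else 0

/-- The (1-indexed) rank of `x` in `s`. -/
noncomputable def rnk (s : Finset ℕ) (x : ℕ) : ℕ :=
  if h : x ∈ s then ((s.orderIsoOfFin rfl).symm ⟨x, h⟩ : ℕ) + 1 else 0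

theorem nth_mem {s : Finset ℕ} {i : ℕ} (h : i ∈ Finset.Icc 1 s.card) :
    nth s i ∈ s := by
  rw [Finset.mem_Icc] at h
  have hlt : i - 1 < s.card := by omega
  rw [nth, dif_pos hlt]
  exact ((s.orderIsoOfFin rfl) ⟨i - 1, hlt⟩).2

theorem rnk_mem_Icc {s : Finset ℕ} {x : ℕ} (h : x ∈ s) :
    rnk s x ∈ Finset.Icc 1 s.card := by
  rw [rnk, dif_pos h, Finset.mem_Icc]
  have := ((s.orderIsoOfFin rfl).symm ⟨x, h⟩).2
  omega

theorem rnk_pos {s : Finset ℕ} {x : ℕ} (h : x ∈ s) : 0 < rnk s x := by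
  rw [rnk, dif_pos h]; omega

theorem rnk_lt_rnk {s : Finset ℕ} {x y : ℕ} (hx : x ∈ s) (hy : y ∈ s)
    (hxy : x < y) : rnk s x < rnk s y := by
  simp only [rnk]
  rw [dif_pos hx, dif_pos hy]
  have : (s.orderIsoOfFin rfl).symm ⟨x, hx⟩ < (s.orderIsoOfFin rfl).symm ⟨y, hy⟩ := by
    rw [OrderIso.lt_iff_lt]
    exact Subtype.mk_lt_mk.mpr hxy
  omega

theorem nth_lt_nth {s : Finset ℕ} {i j : ℕ} (hi : i ∈ Finset.Icc 1 s.card)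
    (hj : j ∈ Finset.Icc 1 s.card) (hij : i < j) : nth s i < nth s j := by
  rw [Finset.mem_Icc] at hi hj
  have hi' : i - 1 < s.card := by omega
  have hj' : j - 1 < s.card := by omega
  simp only [nth]
  rw [dif_pos hi', dif_pos hj']
  have : (s.orderIsoOfFin rfl) ⟨i - 1, hi'⟩ < (s.orderIsoOfFin rfl) ⟨j - 1, hj'⟩ := by
    rw [OrderIso.lt_iff_lt]
    exact Fin.mk_lt_mk.mpr (by omega)
  exact this

theorem rnk_nth {s : Finset ℕ} {i : ℕ} (h : i ∈ Finset.Icc 1 s.card) :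
    rnk s (nth s i) = i := by
  rw [Finset.mem_Icc] at h
  have hlt : i - 1 < s.card := by omega
  have hmem : nth s i ∈ s := nth_mem (by rw [Finset.mem_Icc]; omega)
  rw [rnk, dif_pos hmem]
  have : (⟨nth s i, hmem⟩ : {x // x ∈ s}) = (s.orderIsoOfFin rfl) ⟨i - 1, hlt⟩ := by
    apply Subtype.ext
    simp only [nth]
    rw [dif_pos hlt]
  rw [this, OrderIso.symm_apply_apply]
  simp; omega

theorem nth_rnk {s : Finset ℕ} {x : ℕ} (h : x ∈ s) : nth s (rnk s x) = x := by
  have h1 : rnk s x = ((s.orderIsoOfFin rfl).symm ⟨x, h⟩ : ℕ) + 1 := by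
    rw [rnk, dif_pos h]
  have hlt : rnk s x - 1 < s.card := by
    have := ((s.orderIsoOfFin rfl).symm ⟨x, h⟩).2
    omega
  rw [nth, dif_pos hlt]
  have : (⟨rnk s x - 1, hlt⟩ : Fin s.card) = (s.orderIsoOfFin rfl).symm ⟨x, h⟩ := by
    apply Fin.ext
    simp [h1]
  rw [this, OrderIso.apply_symm_apply]

theorem map_val_eq {s u : Finset ℕ} {f : ℕ → ℕ}
    (hinj : ∀ x ∈ s, ∀ y ∈ s, f x = f y → x = y)
    (hsub : ∀ x ∈ s, f x ∈ u) (hcard : u.card ≤ s.card) :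
    s.val.map f = u.val := by
  have himg : s.image f = u := by
    apply Finset.eq_of_subset_of_card_le
    · intro y hy
      obtain ⟨x, hx, rfl⟩ := Finset.mem_image.mp hy
      exact hsub x hx
    · rw [Finset.card_image_of_injOn fun x hx y hy => hinj x hx y hy]
      exact hcard
  have hnodup : (s.val.map f).Nodup := Multiset.Nodup.map_on hinj s.nodup
  calc s.val.map f = (s.val.map f).dedup := (Multiset.dedup_eq_self.mpr hnodup).symm
    _ = (s.image f).val := (Finset.image_val f s).symm
    _ = u.val := by rw [himg]

theorem rnk_map_val (s : Finset ℕ) :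
    s.val.map (rnk s) = (Finset.Icc 1 s.card).val := by
  apply map_val_eq
  · intro x hx y hy hxy
    rcases lt_trichotomy x y with h | h | h
    · exact absurd hxy (rnk_lt_rnk hx hy h).ne
    · exact h
    · exact absurd hxy.symm (rnk_lt_rnk hy hx h).ne
  · exact fun x hx => rnk_mem_Icc hx
  · rw [Nat.card_Icc]; omega

theorem nth_map_val (s : Finset ℕ) :
    (Finset.Icc 1 s.card).val.map (nth s) = s.val := by
  apply map_val_eq
  · intro x hx y hy hxy
    rcases lt_trichotomy x y with h | h | h
    · exact absurd hxy (nth_lt_nth hx hy h).ne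
    · exact h
    · exact absurd hxy.symm (nth_lt_nth hy hx h).ne
  · exact fun x hx => nth_mem hx
  · rw [Nat.card_Icc]; omega

theorem sdiff_of_val_add {u s t : Finset ℕ} (h : s.val + t.val = u.val) :
    u \ s = t := by
  have hnd : (s.val + t.val).Nodup := by rw [h]; exact u.nodup
  have hd := (Multiset.nodup_add.mp hnd).2.2
  ext x
  have hx : x ∈ u ↔ x ∈ s ∨ x ∈ t := by
    rw [← Finset.mem_val, ← h, Multiset.mem_add, Finset.mem_val, Finset.mem_val]
  simp only [Finset.mem_sdiff, hx]
  constructor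
  · rintro ⟨h1 | h1, h2⟩
    · exact absurd h1 h2
    · exact h1
  · intro h1
    exact ⟨Or.inr h1, fun h2 => Multiset.disjoint_left.mp hd h2 h1⟩

theorem val_add_of_sdiff {u s : Finset ℕ} (h : s ⊆ u) :
    s.val + (u \ s).val = u.val := by
  have hdisj : Disjoint s (u \ s) := Finset.disjoint_sdiff
  have h1 : s.disjUnion (u \ s) hdisj = u := by
    rw [Finset.disjUnion_eq_union, Finset.union_sdiff_of_subset h]
  calc s.val + (u \ s).val = (s.disjUnion (u \ s) hdisj).val := rfl
    _ = u.val := by rw [h1]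

theorem Icc_val_cons {m : ℕ} (hm : 1 ≤ m) :
    (1 : ℕ) ::ₘ (Finset.Icc 2 m).val = (Finset.Icc 1 m).val := by
  have h1 : Finset.Icc 1 m = insert 1 (Finset.Icc 2 m) := by
    ext x; simp only [Finset.mem_Icc, Finset.mem_insert]; omega
  rw [h1, Finset.insert_val_of_notMem (by simp [Finset.mem_Icc])]

theorem RLTree.Equiv.increasingFrom_iff {t t' : RLTree} (h : RLTree.Equiv t t') :
    ∀ b, RLTree.IncreasingFrom b t ↔ RLTree.IncreasingFrom b t' := by
  induction h with
  | leaf x => exact fun b => Iff.rfl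
  | node h1 h2 ih1 ih2 =>
    intro b
    simp only [RLTree.IncreasingFrom]
    rw [ih1, ih2]
  | swap h1 h2 ih1 ih2 =>
    intro b
    simp only [RLTree.IncreasingFrom]
    rw [ih1, ih2]
    exact and_congr Iff.rfl and_comm

theorem union_val_of_disjoint {s t : Finset ℕ} (h : Disjoint s t) :
    (s ∪ t).val = s.val + t.val := by
  rw [← Finset.disjUnion_eq_union s t h]; rfl

theorem samples_ne (π₁ π₂ : LPP) (hv : (LPP.node π₁ π₂).Valid) :
    π₁.samples ≠ π₂.samples := by
  intro e
  have hd := hv.2.2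
  rw [e, disjoint_self] at hd
  obtain ⟨x, hx⟩ := hv.2.1.samples_nonempty
  rw [hd] at hx
  simp at hx

theorem exists_dec (π₁ π₂ : LPP) (hv : (LPP.node π₁ π₂).Valid) {t : RLTree}
    (h1 : t.Valid (LPP.node π₁ π₂).samples)
    (h2 : LPP.Refines t.toLPP (LPP.node π₁ π₂)) :
    ∃ l r : RLTree, RLTree.Equiv t (RLTree.node 1 l r) ∧
      l.leafLabels = π₁.samples.val ∧ r.leafLabels = π₂.samples.val ∧
      l.ranks + r.ranks =
        (Finset.Icc 2 (π₁.samples.card + π₂.samples.card - 1)).val ∧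
      RLTree.IncreasingFrom 1 l ∧ RLTree.IncreasingFrom 1 r ∧
      LPP.Refines l.toLPP π₁ ∧ LPP.Refines r.toLPP π₂ := by
  obtain ⟨hval1, hval2, hval3⟩ := h1
  have hdisj := hv.2.2
  have hs : (LPP.node π₁ π₂).samples = π₁.samples ∪ π₂.samples := rfl
  have hcardu : (π₁.samples ∪ π₂.samples).card =
      π₁.samples.card + π₂.samples.card := Finset.card_union_of_disjoint hdisj
  have hn1 : 1 ≤ π₁.samples.card := Finset.card_pos.mpr hv.1.samples_nonempty
  have hn2 : 1 ≤ π₂.samples.card := Finset.card_pos.mpr hv.2.1.samples_nonempty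
  cases t with
  | leaf x =>
    exfalso
    have := congrArg Multiset.card hval1
    simp only [RLTree.leafLabels, Multiset.card_singleton, hs] at this
    rw [show (π₁.samples ∪ π₂.samples).val.card = (π₁.samples ∪ π₂.samples).card
      from rfl, hcardu] at this
    omega
  | node k c₁ c₂ =>
    rw [hs] at hval1 hval2
    rw [hcardu] at hval2
    -- root rank is 1
    have hk : k = 1 := by
      have hkmem : k ∈ (RLTree.node k c₁ c₂).ranks := by
        simp [RLTree.ranks]
      have hk1 : 1 ≤ k := by
        rw [hval2] at hkmem
        have := Finset.mem_Icc.mp (Finset.mem_val.mp hkmem)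
        omega
      have h1mem : (1 : ℕ) ∈ (RLTree.node k c₁ c₂).ranks := by
        rw [hval2, Finset.mem_val, Finset.mem_Icc]
        omega
      rcases Multiset.mem_cons.mp h1mem with h | h
      · omega
      · exfalso
        obtain ⟨hb, hl, hr⟩ := hval3
        rcases Multiset.mem_add.mp h with h | h
        · have := RLTree.increasingFrom_lt_ranks hl 1 h; omega
        · have := RLTree.increasingFrom_lt_ranks hr 1 h; omega
    subst hk
    have main : ∀ l r : RLTree,
        RLTree.Equiv (RLTree.node 1 c₁ c₂) (RLTree.node 1 l r) →
        LPP.Refines l.toLPP π₁ → LPP.Refines r.toLPP π₂ →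
        RLTree.Equiv (RLTree.node 1 c₁ c₂) (RLTree.node 1 l r) ∧
        l.leafLabels = π₁.samples.val ∧ r.leafLabels = π₂.samples.val ∧
        l.ranks + r.ranks =
          (Finset.Icc 2 (π₁.samples.card + π₂.samples.card - 1)).val ∧
        RLTree.IncreasingFrom 1 l ∧ RLTree.IncreasingFrom 1 r ∧
        LPP.Refines l.toLPP π₁ ∧ LPP.Refines r.toLPP π₂ := by
      intro l r hEq hR1 hR2
      have hleafEq := hEq.leafLabels_eq
      have hranksEq := hEq.ranks_eq
      have hL : l.leafLabels + r.leafLabels = (π₁.samples ∪ π₂.samples).val := by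
        rw [← show (RLTree.node 1 l r).leafLabels = l.leafLabels + r.leafLabels
          from rfl, ← hleafEq, hval1]
      have hLnodup : (l.leafLabels + r.leafLabels).Nodup := by
        rw [hL]; exact (π₁.samples ∪ π₂.samples).nodup
      obtain ⟨hndl, hndr, -⟩ := Multiset.nodup_add.mp hLnodup
      have hlleaf : l.leafLabels = π₁.samples.val := by
        have hsamp : l.toLPP.samples = π₁.samples := hR1.samples_eq
        rw [RLTree.toLPP_samples] at hsamp
        calc l.leafLabels = l.leafLabels.dedup := (Multiset.dedup_eq_self.mpr hndl).symm
          _ = l.leafLabels.toFinset.val := (Multiset.toFinset_val _).symm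
          _ = π₁.samples.val := by rw [hsamp]
      have hrleaf : r.leafLabels = π₂.samples.val := by
        have hsamp : r.toLPP.samples = π₂.samples := hR2.samples_eq
        rw [RLTree.toLPP_samples] at hsamp
        calc r.leafLabels = r.leafLabels.dedup := (Multiset.dedup_eq_self.mpr hndr).symm
          _ = r.leafLabels.toFinset.val := (Multiset.toFinset_val _).symm
          _ = π₂.samples.val := by rw [hsamp]
      have hsum : l.ranks + r.ranks =
          (Finset.Icc 2 (π₁.samples.card + π₂.samples.card - 1)).val := by
        have h1 : (1 : ℕ) ::ₘ (l.ranks + r.ranks) =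
            (Finset.Icc 1 (π₁.samples.card + π₂.samples.card - 1)).val := by
          rw [← show (RLTree.node 1 l r).ranks = 1 ::ₘ (l.ranks + r.ranks) from rfl,
            ← hranksEq, hval2]
        have h2 : (1 : ℕ) ::ₘ
            (Finset.Icc 2 (π₁.samples.card + π₂.samples.card - 1)).val =
            (Finset.Icc 1 (π₁.samples.card + π₂.samples.card - 1)).val :=
          Icc_val_cons (by omega)
        have := h1.trans h2.symm
        exact (Multiset.cons_inj_right 1).mp this
      have hinc : RLTree.IncreasingFrom 0 (RLTree.node 1 l r) :=
        (hEq.increasingFrom_iff 0).mp hval3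
      exact ⟨hEq, hlleaf, hrleaf, hsum, hinc.2.1, hinc.2.2, hR1, hR2⟩
    obtain ⟨a, b, heq, hor⟩ := LPP.refines_node_inv h2
    injection heq with e1 e2
    rw [← e1, ← e2] at hor
    rcases hor with ⟨hA, hB⟩ | ⟨hA, hB⟩
    · exact ⟨c₁, c₂, main c₁ c₂ (RLTree.Equiv.rfl _) hA hB⟩
    · exact ⟨c₂, c₁, main c₂ c₁
        (RLTree.Equiv.swap (RLTree.Equiv.rfl _) (RLTree.Equiv.rfl _)) hB hA⟩

/-- The subtype counted by `GLcount`. -/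
abbrev Aset (π : LPP) := {q : Quot RLTree.Equiv //
    ∃ t : RLTree, Quot.mk _ t = q ∧ t.Valid π.samples ∧ LPP.Refines t.toLPP π}

/-- Choices of the left-subtree rank set. -/
abbrev Cset (π₁ π₂ : LPP) := {c : Finset ℕ //
    c ⊆ Finset.Icc 2 (π₁.samples.card + π₂.samples.card - 1) ∧
    c.card = π₁.samples.card - 1}

/-- Combine two ranked labeled trees into one, sending the left ranks into `c`. -/
noncomputable def buildT (π₁ π₂ : LPP) (c : Finset ℕ) (t₁ t₂ : RLTree) : RLTree :=
  RLTree.node 1 (RLTree.relabel (nth c) t₁)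
    (RLTree.relabel
      (nth (Finset.Icc 2 (π₁.samples.card + π₂.samples.card - 1) \ c)) t₂)

theorem buildT_spec (π₁ π₂ : LPP) (hv : (LPP.node π₁ π₂).Valid) {c : Finset ℕ}
    (hc1 : c ⊆ Finset.Icc 2 (π₁.samples.card + π₂.samples.card - 1))
    (hc2 : c.card = π₁.samples.card - 1) {t₁ t₂ : RLTree}
    (h₁ : t₁.Valid π₁.samples ∧ LPP.Refines t₁.toLPP π₁)
    (h₂ : t₂.Valid π₂.samples ∧ LPP.Refines t₂.toLPP π₂) :
    (buildT π₁ π₂ c t₁ t₂).Valid (LPP.node π₁ π₂).samples ∧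
      LPP.Refines (buildT π₁ π₂ c t₁ t₂).toLPP (LPP.node π₁ π₂) := by
  have hdisj := hv.2.2
  have hn1 : 1 ≤ π₁.samples.card := Finset.card_pos.mpr hv.1.samples_nonempty
  have hn2 : 1 ≤ π₂.samples.card := Finset.card_pos.mpr hv.2.1.samples_nonempty
  set U := Finset.Icc 2 (π₁.samples.card + π₂.samples.card - 1) with hU
  have hUcard : U.card = π₁.samples.card + π₂.samples.card - 2 := by
    rw [hU, Nat.card_Icc]; omega
  have hc'card : (U \ c).card = π₂.samples.card - 1 := by
    rw [Finset.card_sdiff_of_subset hc1, hUcard, hc2]; omega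
  have hcsum : c.val + (U \ c).val = U.val := val_add_of_sdiff hc1
  have hs : (LPP.node π₁ π₂).samples = π₁.samples ∪ π₂.samples := rfl
  have hcardu : (π₁.samples ∪ π₂.samples).card =
      π₁.samples.card + π₂.samples.card := Finset.card_union_of_disjoint hdisj
  have ht₁r : t₁.ranks = (Finset.Icc 1 c.card).val := by
    rw [h₁.1.2.1, hc2]
  have ht₂r : t₂.ranks = (Finset.Icc 1 (U \ c).card).val := by
    rw [h₂.1.2.1, hc'card]
  refine ⟨⟨?_, ?_, ?_⟩, ?_⟩
  · -- leaf labels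
    show (RLTree.relabel (nth c) t₁).leafLabels +
        (RLTree.relabel (nth (U \ c)) t₂).leafLabels = _
    rw [RLTree.relabel_leafLabels, RLTree.relabel_leafLabels, h₁.1.1, h₂.1.1,
      hs, union_val_of_disjoint hdisj]
  · -- ranks
    show (1 : ℕ) ::ₘ ((RLTree.relabel (nth c) t₁).ranks +
        (RLTree.relabel (nth (U \ c)) t₂).ranks) = _
    rw [RLTree.relabel_ranks, RLTree.relabel_ranks, ht₁r, ht₂r,
      nth_map_val, nth_map_val, hcsum, hs, hcardu]
    exact Icc_val_cons (by omega)
  · -- increasing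
    refine ⟨Nat.zero_lt_one, ?_, ?_⟩
    · refine RLTree.increasingFrom_relabel ?_ ?_ h₁.1.2.2
      · intro x hx y hy hxy
        rw [ht₁r, Finset.mem_val] at hx hy
        exact nth_lt_nth hx hy hxy
      · intro x hx _
        rw [ht₁r, Finset.mem_val] at hx
        have := hc1 (nth_mem hx)
        rw [hU, Finset.mem_Icc] at this
        omega
    · refine RLTree.increasingFrom_relabel ?_ ?_ h₂.1.2.2
      · intro x hx y hy hxy
        rw [ht₂r, Finset.mem_val] at hx hy
        exact nth_lt_nth hx hy hxy
      · intro x hx _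
        rw [ht₂r, Finset.mem_val] at hx
        have h' := Finset.sdiff_subset (nth_mem hx)
        rw [hU, Finset.mem_Icc] at h'
        omega
  · -- refines
    show LPP.Refines (LPP.node (RLTree.relabel (nth c) t₁).toLPP
        (RLTree.relabel (nth (U \ c)) t₂).toLPP) (LPP.node π₁ π₂)
    rw [RLTree.relabel_toLPP, RLTree.relabel_toLPP]
    exact LPP.refines_node h₁.2 h₂.2

/-- The inverse of the decomposition map. -/
noncomputable def Gmap (π₁ π₂ : LPP) (hv : (LPP.node π₁ π₂).Valid) :
    Cset π₁ π₂ × Aset π₁ × Aset π₂ → Aset (LPP.node π₁ π₂) := fun x =>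
  ⟨Quot.mk _ (buildT π₁ π₂ x.1.1 x.2.1.2.choose x.2.2.2.choose),
    buildT π₁ π₂ x.1.1 x.2.1.2.choose x.2.2.2.choose, rfl,
    (buildT_spec π₁ π₂ hv x.1.2.1 x.1.2.2
      ⟨x.2.1.2.choose_spec.2.1, x.2.1.2.choose_spec.2.2⟩
      ⟨x.2.2.2.choose_spec.2.1, x.2.2.2.choose_spec.2.2⟩).1,
    (buildT_spec π₁ π₂ hv x.1.2.1 x.1.2.2
      ⟨x.2.1.2.choose_spec.2.1, x.2.1.2.choose_spec.2.2⟩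
      ⟨x.2.2.2.choose_spec.2.1, x.2.2.2.choose_spec.2.2⟩).2⟩

theorem relabel_nth_collapse {c : Finset ℕ} {t : RLTree}
    (h : t.ranks = (Finset.Icc 1 c.card).val) :
    RLTree.relabel (rnk c) (RLTree.relabel (nth c) t) = t :=
  RLTree.relabel_relabel_eq_self (fun z hz => by
    rw [h, Finset.mem_val] at hz
    exact rnk_nth hz)

theorem relabel_rnk_collapse {s : Finset ℕ} {t : RLTree} (h : t.ranks = s.val) :
    RLTree.relabel (nth s) (RLTree.relabel (rnk s) t) = t :=
  RLTree.relabel_relabel_eq_self (fun z hz =>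
    nth_rnk (by rw [h, Finset.mem_val] at hz; exact hz))

theorem relabel_nth_ranks {c : Finset ℕ} {t : RLTree}
    (h : t.ranks = (Finset.Icc 1 c.card).val) :
    (RLTree.relabel (nth c) t).ranks = c.val := by
  rw [RLTree.relabel_ranks, h, nth_map_val]

theorem Gmap_inj (π₁ π₂ : LPP) (hv : (LPP.node π₁ π₂).Valid) :
    Function.Injective (Gmap π₁ π₂ hv) := by
  have hn1 : 1 ≤ π₁.samples.card := Finset.card_pos.mpr hv.1.samples_nonempty
  have hn2 : 1 ≤ π₂.samples.card := Finset.card_pos.mpr hv.2.1.samples_nonempty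
  rintro ⟨x1, x2, x3⟩ ⟨y1, y2, y3⟩ h
  obtain ⟨hmkx₁, hvalx₁, hrefx₁⟩ := x2.2.choose_spec
  obtain ⟨hmkx₂, hvalx₂, hrefx₂⟩ := x3.2.choose_spec
  obtain ⟨hmky₁, hvaly₁, hrefy₁⟩ := y2.2.choose_spec
  obtain ⟨hmky₂, hvaly₂, hrefy₂⟩ := y3.2.choose_spec
  have hq : Quot.mk RLTree.Equiv (buildT π₁ π₂ x1.1 x2.2.choose x3.2.choose) =
      Quot.mk RLTree.Equiv (buildT π₁ π₂ y1.1 y2.2.choose y3.2.choose) :=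
    congrArg Subtype.val h
  have hequiv := RLTree.quot_mk_eq_iff.mp hq
  simp only [buildT] at hequiv
  obtain ⟨-, hor⟩ := RLTree.equiv_node_inv hequiv
  -- rule out the crossed case
  rcases hor with ⟨hLL, hRR⟩ | ⟨hLR, hRL⟩
  swap
  · exfalso
    have hlab := hLR.leafLabels_eq
    rw [RLTree.relabel_leafLabels, RLTree.relabel_leafLabels,
      hvalx₁.1, hvaly₂.1] at hlab
    exact samples_ne π₁ π₂ hv (Finset.val_inj.mp hlab)
  -- rank-set components agree
  have hxr : (RLTree.relabel (nth x1.1) x2.2.choose).ranks = x1.1.val :=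
    relabel_nth_ranks (by rw [x1.2.2]; exact hvalx₁.2.1)
  have hyr : (RLTree.relabel (nth y1.1) y2.2.choose).ranks = y1.1.val :=
    relabel_nth_ranks (by rw [y1.2.2]; exact hvaly₁.2.1)
  have hcval : x1.1.val = y1.1.val := by rw [← hxr, ← hyr]; exact hLL.ranks_eq
  have hc : x1.1 = y1.1 := Finset.val_inj.mp hcval
  -- left classes agree
  have e1 : RLTree.Equiv x2.2.choose y2.2.choose := by
    have h' := hLL.relabel (rnk x1.1)
    rw [relabel_nth_collapse (by rw [x1.2.2]; exact hvalx₁.2.1)] at h'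
    rw [hc, relabel_nth_collapse (by rw [y1.2.2]; exact hvaly₁.2.1)] at h'
    exact h'
  -- right classes agree
  have hcdx : (Finset.Icc 2 (π₁.samples.card + π₂.samples.card - 1) \ x1.1).card
      = π₂.samples.card - 1 := by
    rw [Finset.card_sdiff_of_subset x1.2.1, x1.2.2, Nat.card_Icc]; omega
  have hcdy : (Finset.Icc 2 (π₁.samples.card + π₂.samples.card - 1) \ y1.1).card
      = π₂.samples.card - 1 := by
    rw [Finset.card_sdiff_of_subset y1.2.1, y1.2.2, Nat.card_Icc]; omega
  have e2 : RLTree.Equiv x3.2.choose y3.2.choose := by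
    have h' := hRR.relabel
      (rnk (Finset.Icc 2 (π₁.samples.card + π₂.samples.card - 1) \ x1.1))
    rw [relabel_nth_collapse (by rw [hcdx]; exact hvalx₂.2.1)] at h'
    rw [hc, relabel_nth_collapse (by rw [hcdy]; exact hvaly₂.2.1)] at h'
    exact h'
  have h1 : x1 = y1 := Subtype.ext hc
  have h2 : x2 = y2 := Subtype.ext (by rw [← hmkx₁, ← hmky₁]; exact Quot.sound e1)
  have h3 : x3 = y3 := Subtype.ext (by rw [← hmkx₂, ← hmky₂]; exact Quot.sound e2)
  rw [h1, h2, h3]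

theorem Gmap_surj (π₁ π₂ : LPP) (hv : (LPP.node π₁ π₂).Valid) :
    Function.Surjective (Gmap π₁ π₂ hv) := by
  have hn1 : 1 ≤ π₁.samples.card := Finset.card_pos.mpr hv.1.samples_nonempty
  have hn2 : 1 ≤ π₂.samples.card := Finset.card_pos.mpr hv.2.1.samples_nonempty
  rintro ⟨q, t, hmk, hval, href⟩
  obtain ⟨l, r, hEq, hlleaf, hrleaf, hsum, hincl, hincr, hRl, hRr⟩ :=
    exists_dec π₁ π₂ hv hval href
  set S := l.ranks.toFinset with hSdef
  set S₂ := r.ranks.toFinset with hS2def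
  have hnodupsum : (l.ranks + r.ranks).Nodup := by
    rw [hsum]; exact (Finset.Icc 2 (π₁.samples.card + π₂.samples.card - 1)).nodup
  obtain ⟨hndl, hndr, -⟩ := Multiset.nodup_add.mp hnodupsum
  have hSval : S.val = l.ranks := by
    rw [hSdef, Multiset.toFinset_val, Multiset.dedup_eq_self.mpr hndl]
  have hS2val : S₂.val = r.ranks := by
    rw [hS2def, Multiset.toFinset_val, Multiset.dedup_eq_self.mpr hndr]
  have hScard : S.card = π₁.samples.card - 1 := by
    have h1 := RLTree.card_leafLabels l
    rw [hlleaf] at h1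
    have h2 : Multiset.card π₁.samples.val = π₁.samples.card := rfl
    have h3 : S.card = Multiset.card l.ranks := congrArg Multiset.card hSval
    omega
  have hS2card : S₂.card = π₂.samples.card - 1 := by
    have h1 := RLTree.card_leafLabels r
    rw [hrleaf] at h1
    have h2 : Multiset.card π₂.samples.val = π₂.samples.card := rfl
    have h3 : S₂.card = Multiset.card r.ranks := congrArg Multiset.card hS2val
    omega
  have hSsub : S ⊆ Finset.Icc 2 (π₁.samples.card + π₂.samples.card - 1) := by
    intro z hz
    rw [← Finset.mem_val, hSval] at hz
    rw [← Finset.mem_val, ← hsum]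
    exact Multiset.mem_add.mpr (Or.inl hz)
  have hcompl : Finset.Icc 2 (π₁.samples.card + π₂.samples.card - 1) \ S = S₂ :=
    sdiff_of_val_add (by rw [hSval, hS2val]; exact hsum)
  have hval₁ : (RLTree.relabel (rnk S) l).Valid π₁.samples := by
    refine ⟨by rw [RLTree.relabel_leafLabels]; exact hlleaf, ?_, ?_⟩
    · rw [RLTree.relabel_ranks, ← hSval, rnk_map_val, hScard]
    · refine RLTree.increasingFrom_relabel ?_ ?_ hincl
      · intro a ha b hb hab
        exact rnk_lt_rnk (Multiset.mem_toFinset.mpr ha)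
          (Multiset.mem_toFinset.mpr hb) hab
      · intro a ha _
        exact rnk_pos (Multiset.mem_toFinset.mpr ha)
  have hval₂ : (RLTree.relabel (rnk S₂) r).Valid π₂.samples := by
    refine ⟨by rw [RLTree.relabel_leafLabels]; exact hrleaf, ?_, ?_⟩
    · rw [RLTree.relabel_ranks, ← hS2val, rnk_map_val, hS2card]
    · refine RLTree.increasingFrom_relabel ?_ ?_ hincr
      · intro a ha b hb hab
        exact rnk_lt_rnk (Multiset.mem_toFinset.mpr ha)
          (Multiset.mem_toFinset.mpr hb) hab
      · intro a ha _
        exact rnk_pos (Multiset.mem_toFinset.mpr ha)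
  have E₁ : ∃ t' : RLTree, Quot.mk RLTree.Equiv t' =
      Quot.mk RLTree.Equiv (RLTree.relabel (rnk S) l) ∧
      t'.Valid π₁.samples ∧ LPP.Refines t'.toLPP π₁ :=
    ⟨RLTree.relabel (rnk S) l, rfl, hval₁,
      by rw [RLTree.relabel_toLPP]; exact hRl⟩
  have E₂ : ∃ t' : RLTree, Quot.mk RLTree.Equiv t' =
      Quot.mk RLTree.Equiv (RLTree.relabel (rnk S₂) r) ∧
      t'.Valid π₂.samples ∧ LPP.Refines t'.toLPP π₂ :=
    ⟨RLTree.relabel (rnk S₂) r, rfl, hval₂,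
      by rw [RLTree.relabel_toLPP]; exact hRr⟩
  refine ⟨⟨⟨S, hSsub, hScard⟩,
    ⟨Quot.mk RLTree.Equiv (RLTree.relabel (rnk S) l), E₁⟩,
    ⟨Quot.mk RLTree.Equiv (RLTree.relabel (rnk S₂) r), E₂⟩⟩, ?_⟩
  apply Subtype.ext
  show Quot.mk RLTree.Equiv (buildT π₁ π₂ S E₁.choose E₂.choose) = q
  obtain ⟨hmkc₁, hvalc₁, hrefc₁⟩ := E₁.choose_spec
  obtain ⟨hmkc₂, hvalc₂, hrefc₂⟩ := E₂.choose_spec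
  have e₁ : RLTree.Equiv E₁.choose (RLTree.relabel (rnk S) l) :=
    RLTree.quot_mk_eq_iff.mp hmkc₁
  have e₂ : RLTree.Equiv E₂.choose (RLTree.relabel (rnk S₂) r) :=
    RLTree.quot_mk_eq_iff.mp hmkc₂
  have eq₁ : RLTree.Equiv (RLTree.relabel (nth S) E₁.choose) l := by
    have h' := e₁.relabel (nth S)
    rw [relabel_rnk_collapse hSval.symm] at h'
    exact h'
  have eq₂ : RLTree.Equiv (RLTree.relabel
      (nth (Finset.Icc 2 (π₁.samples.card + π₂.samples.card - 1) \ S))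
      E₂.choose) r := by
    rw [hcompl]
    have h' := e₂.relabel (nth S₂)
    rw [relabel_rnk_collapse hS2val.symm] at h'
    exact h'
  have hfin : RLTree.Equiv (buildT π₁ π₂ S E₁.choose E₂.choose) t :=
    (RLTree.Equiv.node eq₁ eq₂).trans hEq.symm
  rw [← hmk]
  exact Quot.sound hfin

theorem GLcount_node (π₁ π₂ : LPP) (hv : (LPP.node π₁ π₂).Valid) :
    GLcount (LPP.node π₁ π₂) =
      (π₁.samples.card + π₂.samples.card - 2).choose (π₁.samples.card - 1) *
        GLcount π₁ * GLcount π₂ := by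
  have hn1 : 1 ≤ π₁.samples.card := Finset.card_pos.mpr hv.1.samples_nonempty
  have hn2 : 1 ≤ π₂.samples.card := Finset.card_pos.mpr hv.2.1.samples_nonempty
  have hbij : Function.Bijective (Gmap π₁ π₂ hv) :=
    ⟨Gmap_inj π₁ π₂ hv, Gmap_surj π₁ π₂ hv⟩
  have hcard : Nat.card (Cset π₁ π₂ × Aset π₁ × Aset π₂) =
      Nat.card (Aset (LPP.node π₁ π₂)) :=
    Nat.card_congr (Equiv.ofBijective _ hbij)
  have hC : Nat.card (Cset π₁ π₂) =
      (π₁.samples.card + π₂.samples.card - 2).choose (π₁.samples.card - 1) := by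
    rw [Nat.card_congr (Equiv.subtypeEquivRight (q := fun c =>
      c ∈ (Finset.Icc 2 (π₁.samples.card + π₂.samples.card - 1)).powersetCard
        (π₁.samples.card - 1)) (fun c => Finset.mem_powersetCard.symm))]
    rw [Nat.card_eq_finsetCard, Finset.card_powersetCard, Nat.card_Icc]
    rw [show π₁.samples.card + π₂.samples.card - 1 + 1 - 2 =
      π₁.samples.card + π₂.samples.card - 2 from by omega]
  have hg0 : GLcount (LPP.node π₁ π₂) = Nat.card (Aset (LPP.node π₁ π₂)) := rfl
  have hg1 : GLcount π₁ = Nat.card (Aset π₁) := rfl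
  have hg2 : GLcount π₂ = Nat.card (Aset π₂) := rfl
  rw [hg0, hg1, hg2, ← hcard, Nat.card_prod, Nat.card_prod, hC, mul_assoc]

/-- Proposition 6: the number of ranked labeled tree shapes compatible with a labeled
binary perfect phylogeny `(π₁, π₂)`, where `π₁` carries `n₁` samples and `π₂` carries
`n₂`, equals `C(n₁+n₂-2, n₁-1)` times the product of the counts for `π₁` and `π₂`. -/
theorem rankedLabeled_compatible_node (π₁ π₂ : LPP)
    (hv : LPP.Valid (LPP.node π₁ π₂)) :
    GLcount (LPP.node π₁ π₂) =
      (π₁.samples.card + π₂.samples.card - 2).choose (π₁.samples.card - 1) *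
        GLcount π₁ * GLcount π₂ :=
  GLcount_node π₁ π₂ hv
end

section
/- Fix n ≥ 2, and for 1 ≤ x ≤ floor(n/2) let b'_x(n) = binomial(n−2, x−1)·L_x·L_{n−x} with L_m = m!(m−1)!/2^{m−1}. Then b'_x(n) is monotonically decreasing in x on 1 ≤ x ≤ floor(n/2); in particular b'_1(n) is the largest value. -/
lemma choose_mono_half (n : ℕ) : ∀ x y : ℕ, x ≤ y → y ≤ n / 2 →
    n.choose x ≤ n.choose y := by
  intro x y
  induction y with
  | zero =>
    intro h _
    simp [Nat.le_zero.mp h]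
  | succ k ih =>
    intro hxy hy
    rcases Nat.eq_or_lt_of_le hxy with h | h
    · subst h; exact le_refl _
    · exact le_trans (ih (by omega) (by omega))
        (Nat.choose_le_succ_of_lt_half_left (by omega))

/-- Proposition 8: fix `n ≥ 2` and let `b'_x(n) = C(n-2, x-1) L_x L_{n-x}` with
`L_m = m!(m-1)!/2^{m-1}`. Then `b'_x(n)` is monotonically decreasing in `x` on
`1 ≤ x ≤ ⌊n/2⌋`; in particular `b'_1(n)` is the largest value. -/
theorem rankedLabeled_cherry_monotone (n : ℕ) (hn : 2 ≤ n) (L : ℕ → ℕ)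
    (hL : ∀ m : ℕ, 1 ≤ m → L m * 2 ^ (m - 1) = Nat.factorial m * Nat.factorial (m - 1)) :
    (∀ x y : ℕ, 1 ≤ x → x ≤ y → y ≤ n / 2 →
      (n - 2).choose (y - 1) * L y * L (n - y) ≤
        (n - 2).choose (x - 1) * L x * L (n - x)) ∧
    (∀ x : ℕ, 1 ≤ x → x ≤ n / 2 →
      (n - 2).choose (x - 1) * L x * L (n - x) ≤
        (n - 2).choose 0 * L 1 * L (n - 1)) := by
  have key : ∀ x : ℕ, 1 ≤ x → x ≤ n / 2 →
      ((n - 2).choose (x - 1) * L x * L (n - x)) * (n.choose x * 2 ^ (n - 2)) =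
        (n - 2).factorial * n.factorial := by
    intro x hx1 hx2
    have hnx : 1 ≤ n - x := by omega
    have he : n - 2 = (x - 1) + (n - x - 1) := by omega
    have h1 := hL x hx1
    have h2 := hL (n - x) hnx
    have hc1 : (n - 2).choose (x - 1) * Nat.factorial (x - 1) * Nat.factorial (n - x - 1)
        = (n - 2).factorial := by
      have h := Nat.choose_mul_factorial_mul_factorial (show x - 1 ≤ n - 2 by omega)
      rwa [show n - 2 - (x - 1) = n - x - 1 by omega] at h
    have hc2 : n.choose x * Nat.factorial x * Nat.factorial (n - x) = n.factorial :=
      Nat.choose_mul_factorial_mul_factorial (show x ≤ n by omega)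
    calc ((n - 2).choose (x - 1) * L x * L (n - x)) * (n.choose x * 2 ^ (n - 2))
        = ((n - 2).choose (x - 1) * L x * L (n - x)) *
            (n.choose x * (2 ^ (x - 1) * 2 ^ (n - x - 1))) := by rw [he, pow_add]
      _ = (n - 2).choose (x - 1) * ((L x * 2 ^ (x - 1)) * (L (n - x) * 2 ^ (n - x - 1)))
            * n.choose x := by ring
      _ = (n - 2).choose (x - 1) * ((Nat.factorial x * Nat.factorial (x - 1)) *
            (Nat.factorial (n - x) * Nat.factorial (n - x - 1))) * n.choose x := by
          rw [h1, h2]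
      _ = ((n - 2).choose (x - 1) * Nat.factorial (x - 1) * Nat.factorial (n - x - 1)) *
            (n.choose x * Nat.factorial x * Nat.factorial (n - x)) := by ring
      _ = (n - 2).factorial * n.factorial := by rw [hc1, hc2]
  have main : ∀ x y : ℕ, 1 ≤ x → x ≤ y → y ≤ n / 2 →
      (n - 2).choose (y - 1) * L y * L (n - y) ≤
        (n - 2).choose (x - 1) * L x * L (n - x) := by
    intro x y hx1 hxy hy
    have hkx := key x hx1 (le_trans hxy hy)
    have hky := key y (le_trans hx1 hxy) hy
    have hcm : n.choose x ≤ n.choose y := choose_mono_half n x y hxy hy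
    have hpos : 0 < n.choose y * 2 ^ (n - 2) := by
      have : 0 < n.choose y := Nat.choose_pos (by omega)
      positivity
    have hle : ((n - 2).choose (y - 1) * L y * L (n - y)) * (n.choose y * 2 ^ (n - 2)) ≤
        ((n - 2).choose (x - 1) * L x * L (n - x)) * (n.choose y * 2 ^ (n - 2)) := by
      rw [hky, ← hkx]
      exact Nat.mul_le_mul_left _ (Nat.mul_le_mul_right _ hcm)
    exact Nat.le_of_mul_le_mul_right hle hpos
  refine ⟨main, fun x hx1 hx2 => ?_⟩
  have h := main 1 x le_rfl hx1 hx2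
  simpa using h
end

section
/- Fix n ≥ 2, and for 1 ≤ x ≤ floor(n/2) let b''_x(n) = X_x·X_{n−x} with X_m = (2m−2)!/(2^{m−1}(m−1)!). Then b''_{x+1}(n)/b''_x(n) = (2x−1)/(2n−2x−3) ≤ 1 for 1 ≤ x < floor(n/2), so b''_x(n) is monotonically decreasing in x and b''_1(n) is the largest value. -/
/-- Recurrence: `X (m+1) = (2m-1) * X m` for `m ≥ 1`. -/
lemma Xstep_aux (X : ℕ → ℕ)
    (hX : ∀ m : ℕ, 1 ≤ m →
      X m * 2 ^ (m - 1) * Nat.factorial (m - 1) = Nat.factorial (2 * m - 2))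
    (m : ℕ) (hm : 1 ≤ m) : X (m + 1) = (2 * m - 1) * X m := by
  obtain ⟨p, rfl⟩ : ∃ p, m = p + 1 := ⟨m - 1, by omega⟩
  have h1 := hX (p + 1) (by omega)
  have h2 := hX (p + 2) (by omega)
  simp only [show p + 1 - 1 = p from rfl, show p + 2 - 1 = p + 1 from rfl,
    show 2 * (p + 1) - 2 = 2 * p from by omega,
    show 2 * (p + 2) - 2 = 2 * p + 2 from by omega] at h1 h2
  have hfac : Nat.factorial (2 * p + 2) =
      (2 * p + 2) * ((2 * p + 1) * Nat.factorial (2 * p)) := by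
    rw [Nat.factorial_succ, Nat.factorial_succ]
  rw [hfac, ← h1] at h2
  have e1 : 2 * (p + 1) - 1 = 2 * p + 1 := by omega
  rw [e1]
  have key : X (p + 2) * ((2 * (p + 1)) * (2 ^ p * Nat.factorial p)) =
      ((2 * p + 1) * X (p + 1)) * ((2 * (p + 1)) * (2 ^ p * Nat.factorial p)) := by
    have e2 : (2 : ℕ) ^ (p + 1) = 2 * 2 ^ p := by ring
    have e3 : Nat.factorial (p + 1) = (p + 1) * Nat.factorial p := Nat.factorial_succ p
    rw [e2, e3] at h2
    ring_nf
    ring_nf at h2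
    linarith [h2]
  have hpos : 0 < (2 * (p + 1)) * (2 ^ p * Nat.factorial p) := by positivity
  exact Nat.eq_of_mul_eq_mul_right hpos key

/-- Proposition 9: fix `n ≥ 2` and let `b''_x(n) = X_x X_{n-x}` with
`X_m = (2m-2)!/(2^{m-1}(m-1)!)`. Then for `1 ≤ x < ⌊n/2⌋` the ratio
`b''_{x+1}(n)/b''_x(n)` equals `(2x-1)/(2n-2x-3) ≤ 1`, so `b''_x(n)` is monotonically
decreasing in `x` on `1 ≤ x ≤ ⌊n/2⌋` and `b''_1(n)` is the largest value. -/
theorem unrankedLabeled_cherry_monotone (n : ℕ) (hn : 2 ≤ n) (X : ℕ → ℕ)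
    (hX : ∀ m : ℕ, 1 ≤ m →
      X m * 2 ^ (m - 1) * Nat.factorial (m - 1) = Nat.factorial (2 * m - 2)) :
    (∀ x : ℕ, 1 ≤ x → x + 1 ≤ n / 2 →
      X (x + 1) * X (n - (x + 1)) * (2 * n - 2 * x - 3) =
        X x * X (n - x) * (2 * x - 1) ∧
      2 * x - 1 ≤ 2 * n - 2 * x - 3 ∧
      X (x + 1) * X (n - (x + 1)) ≤ X x * X (n - x)) ∧
    (∀ x y : ℕ, 1 ≤ x → x ≤ y → y ≤ n / 2 →
      X y * X (n - y) ≤ X x * X (n - x)) ∧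
    (∀ x : ℕ, 1 ≤ x → x ≤ n / 2 → X x * X (n - x) ≤ X 1 * X (n - 1)) := by
  have step := Xstep_aux X hX
  have part1 : ∀ x : ℕ, 1 ≤ x → x + 1 ≤ n / 2 →
      X (x + 1) * X (n - (x + 1)) * (2 * n - 2 * x - 3) =
        X x * X (n - x) * (2 * x - 1) ∧
      2 * x - 1 ≤ 2 * n - 2 * x - 3 ∧
      X (x + 1) * X (n - (x + 1)) ≤ X x * X (n - x) := by
    intro x hx hxn
    have h2x : 2 * (x + 1) ≤ n := by omega
    -- X (x+1) = (2x-1) X x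
    have hA : X (x + 1) = (2 * x - 1) * X x := step x hx
    -- X (n - x) = (2n-2x-3) X (n - (x+1))
    have hk : 1 ≤ n - (x + 1) := by omega
    have hB : X (n - x) = (2 * n - 2 * x - 3) * X (n - (x + 1)) := by
      have := step (n - (x + 1)) hk
      have e1 : n - (x + 1) + 1 = n - x := by omega
      have e2 : 2 * (n - (x + 1)) - 1 = 2 * n - 2 * x - 3 := by omega
      rw [e1, e2] at this
      exact this
    have hle : 2 * x - 1 ≤ 2 * n - 2 * x - 3 := by omega
    have heq : X (x + 1) * X (n - (x + 1)) * (2 * n - 2 * x - 3) =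
        X x * X (n - x) * (2 * x - 1) := by
      rw [hA, hB]; ring
    refine ⟨heq, hle, ?_⟩
    have hpos : 0 < 2 * n - 2 * x - 3 := by omega
    have : X (x + 1) * X (n - (x + 1)) * (2 * n - 2 * x - 3) ≤
        X x * X (n - x) * (2 * n - 2 * x - 3) := by
      rw [heq]
      exact Nat.mul_le_mul_left _ hle
    exact Nat.le_of_mul_le_mul_right this hpos
  have part2 : ∀ x y : ℕ, 1 ≤ x → x ≤ y → y ≤ n / 2 →
      X y * X (n - y) ≤ X x * X (n - x) := by
    intro x y hx hxy hy
    induction y with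
    | zero => omega
    | succ y ih =>
      rcases Nat.lt_or_ge x (y + 1) with h | h
      · have h1 := (part1 y (by omega) hy).2.2
        exact h1.trans (ih (by omega) (by omega))
      · have : x = y + 1 := by omega
        subst this
        exact le_refl _
  refine ⟨part1, part2, ?_⟩
  intro x hx hxn
  exact part2 1 x le_rfl hx hxn
end

section
/- Define c_x = sum_{k≥0} (−1)^k/(2k+1)^{x+1} for even x ≥ 0, and c_x = (1 − 2^{−(x+1)})·ζ(x+1) for odd x ≥ 1. Then c_1 = π²/8, c_x ≤ 1 for all even x, c_x < ζ(3) < c_1 for all odd x ≥ 3, and hence c_1 strictly exceeds c_x for every x ≠ 1. -/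
open Finset Real

section AuxLemmas

private lemma summable_zshift' (s : ℕ) (hs : 1 < s) :
    Summable (fun k : ℕ => 1 / ((k : ℝ) + 1) ^ s) := by
  have h := (Real.summable_one_div_nat_pow.mpr hs)
  have := (summable_nat_add_iff (f := fun n : ℕ => 1 / (n : ℝ) ^ s) 1).2 h
  refine this.congr fun n => by push_cast; ring_nf

private lemma alt_partial_le' (a : ℕ → ℝ) (ha : ∀ k, 0 ≤ a k) (hmono : ∀ k, a (k + 1) ≤ a k)
    (n : ℕ) : ∑ i ∈ range n, (-1 : ℝ) ^ i * a i ≤ a 0 := by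
  have hodd : ∀ m : ℕ, ∑ i ∈ range (2 * m + 1), (-1 : ℝ) ^ i * a i ≤ a 0 := by
    intro m
    induction m with
    | zero => simp
    | succ m ih =>
        have e : 2 * (m + 1) + 1 = (2 * m + 1) + 1 + 1 := by ring
        rw [e, sum_range_succ, sum_range_succ]
        have h1 : (-1 : ℝ) ^ (2 * m + 1) = -1 := Odd.neg_one_pow ⟨m, by ring⟩
        have h2 : (-1 : ℝ) ^ (2 * m + 1 + 1) = 1 := Even.neg_one_pow ⟨m + 1, by ring⟩
        rw [h1, h2]
        have := hmono (2 * m + 1)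
        nlinarith [ih]
  rcases Nat.even_or_odd n with ⟨m, hm⟩ | ⟨m, hm⟩
  · have step : ∑ i ∈ range n, (-1 : ℝ) ^ i * a i ≤ ∑ i ∈ range (n + 1), (-1 : ℝ) ^ i * a i := by
      rw [sum_range_succ]
      have h1 : (-1 : ℝ) ^ n = 1 := Even.neg_one_pow ⟨m, by omega⟩
      nlinarith [ha n]
    have : n + 1 = 2 * m + 1 := by omega
    exact step.trans (this ▸ hodd m)
  · have : n = 2 * m + 1 := by omega
    exact this ▸ hodd m

end AuxLemmas

/-- The real Riemann zeta value `ζ(s) = ∑_{k ≥ 1} k^{-s}` for natural `s`. -/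
noncomputable def zetaR (s : ℕ) : ℝ := ∑' k : ℕ, 1 / ((k : ℝ) + 1) ^ s

private lemma zetaR_two' : zetaR 2 = π ^ 2 / 6 := by
  have h2 : HasSum (fun n : ℕ => (1 : ℝ) / ((n : ℝ) + 1) ^ 2) (π ^ 2 / 6) := by
    have := (hasSum_nat_add_iff (f := fun n : ℕ => (1 : ℝ) / (n : ℝ) ^ 2) 1
      (g := π ^ 2 / 6)).2 ?_
    · exact this.congr_fun fun n => by push_cast; ring_nf
    · simpa using hasSum_zeta_two
  exact h2.tsum_eq

private lemma zetaR_one_le' (s : ℕ) (hs : 1 < s) : 1 ≤ zetaR s := by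
  have h := summable_zshift' s hs
  have := Summable.le_tsum h 0 (fun j _ => by positivity)
  simpa [zetaR] using this

private lemma zetaR_mono' (s t : ℕ) (hs : 1 < s) (hst : s ≤ t) : zetaR t ≤ zetaR s := by
  refine Summable.tsum_le_tsum (fun k => ?_) (summable_zshift' t (lt_of_lt_of_le hs hst))
    (summable_zshift' s hs)
  have h1 : (1 : ℝ) ≤ (k : ℝ) + 1 := by
    have := Nat.cast_nonneg (α := ℝ) k; linarith
  exact one_div_le_one_div_of_le (by positivity) (pow_le_pow_right₀ h1 hst)

private lemma zetaR_three_lt' : zetaR 3 < 1.21 := by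
  have hsum := summable_zshift' 3 (by norm_num)
  have hsplit := (Summable.sum_add_tsum_nat_add (f := fun k : ℕ => 1 / ((k : ℝ) + 1) ^ 3) 4 hsum).symm
  have htail : (∑' k : ℕ, 1 / (((k : ℕ) + 4 : ℝ) + 1) ^ 3) ≤ 1 / 40 := by
    set g : ℕ → ℝ := fun k => 1 / (2 * ((k : ℝ) + 4) * ((k : ℝ) + 5)) with hg
    refine Real.tsum_le_of_sum_range_le (fun n => by positivity) (fun n => ?_)
    calc ∑ i ∈ range n, 1 / (((i : ℕ) + 4 : ℝ) + 1) ^ 3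
        ≤ ∑ i ∈ range n, (g i - g (i + 1)) := by
          refine sum_le_sum fun i _ => ?_
          have hi : (0:ℝ) ≤ (i : ℝ) := Nat.cast_nonneg i
          have : g i - g (i + 1) = 1 / (((i:ℝ)+4) * ((i:ℝ)+5) * ((i:ℝ)+6)) := by
            rw [hg]; push_cast; field_simp; ring
          rw [this]
          rw [div_le_div_iff₀ (by positivity) (by positivity)]
          nlinarith
      _ = g 0 - g n := Finset.sum_range_sub' g n
      _ ≤ g 0 := by
          have : 0 ≤ g n := by rw [hg]; positivity
          linarith
      _ = 1 / 40 := by rw [hg]; norm_num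
  rw [zetaR, hsplit]
  have hhead : ∑ i ∈ range 4, 1 / ((i : ℝ) + 1) ^ 3 = 1 + 1/8 + 1/27 + 1/64 := by
    simp [Finset.sum_range_succ]; norm_num
  rw [hhead]
  norm_num at htail ⊢
  linarith

/-- `c_x = ∑_{k ≥ 0} (-1)^k/(2k+1)^{x+1}` for even `x`, and
`c_x = (1 - 2^{-(x+1)}) ζ(x+1)` for odd `x`. -/
noncomputable def cseq (x : ℕ) : ℝ :=
  if Even x then ∑' k : ℕ, (-1 : ℝ) ^ k / (2 * (k : ℝ) + 1) ^ (x + 1)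
  else (1 - (2 : ℝ) ^ (-((x : ℤ) + 1))) * zetaR (x + 1)

private lemma cseq_one' : cseq 1 = π ^ 2 / 8 := by
  rw [cseq, if_neg (by simp), zetaR_two']
  norm_num
  ring

private lemma cseq_even_le_one' (x : ℕ) (hx : Even x) : cseq x ≤ 1 := by
  rw [cseq, if_pos hx]
  by_cases h : Summable (fun k : ℕ => (-1 : ℝ) ^ k / (2 * (k : ℝ) + 1) ^ (x + 1))
  · set a : ℕ → ℝ := fun k => 1 / (2 * (k : ℝ) + 1) ^ (x + 1) with ha
    have hfa : ∀ k : ℕ, (-1 : ℝ) ^ k / (2 * (k : ℝ) + 1) ^ (x + 1) = (-1) ^ k * a k := by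
      intro k; rw [ha]; ring
    have ha0 : a 0 = 1 := by rw [ha]; norm_num
    have hnn : ∀ k, 0 ≤ a k := fun k => by rw [ha]; positivity
    have hmono : ∀ k, a (k + 1) ≤ a k := by
      intro k
      rw [ha]
      have hk : (0:ℝ) ≤ (k : ℝ) := Nat.cast_nonneg k
      refine one_div_le_one_div_of_le (by positivity) ?_
      refine pow_le_pow_left₀ (by linarith) (by push_cast; linarith) _
    have htend := h.hasSum.tendsto_sum_nat
    refine le_of_tendsto htend (Filter.Eventually.of_forall fun n => ?_)
    calc ∑ i ∈ range n, (-1 : ℝ) ^ i / (2 * (i : ℝ) + 1) ^ (x + 1)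
        = ∑ i ∈ range n, (-1 : ℝ) ^ i * a i := by
          exact sum_congr rfl fun i _ => hfa i
      _ ≤ a 0 := alt_partial_le' a hnn hmono n
      _ = 1 := ha0
  · rw [tsum_eq_zero_of_not_summable h]; norm_num

private lemma cseq_odd_lt' (x : ℕ) (hx : Odd x) (hx3 : 3 ≤ x) : cseq x < zetaR 3 := by
  rw [cseq, if_neg (Nat.not_even_iff_odd.mpr hx)]
  have hζ1 : 1 ≤ zetaR (x + 1) := zetaR_one_le' (x + 1) (by omega)
  have hδ : (0:ℝ) < (2 : ℝ) ^ (-((x : ℤ) + 1)) := zpow_pos (by norm_num) _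
  have hle : zetaR (x + 1) ≤ zetaR 3 := zetaR_mono' 3 (x + 1) (by norm_num) (by omega)
  nlinarith

/-- `c_1 = π²/8`; `c_x ≤ 1` for all even `x`; `c_x < ζ(3) < c_1` for all odd `x ≥ 3`;
hence `c_1` strictly exceeds `c_x` for every `x ≠ 1`. -/
theorem cseq_max_at_one :
    cseq 1 = Real.pi ^ 2 / 8 ∧
    (∀ x : ℕ, Even x → cseq x ≤ 1) ∧
    (∀ x : ℕ, Odd x → 3 ≤ x → cseq x < zetaR 3 ∧ zetaR 3 < cseq 1) ∧
    (∀ x : ℕ, x ≠ 1 → cseq x < cseq 1) := by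
  have hpi : (3.14 : ℝ) < π := Real.pi_gt_d2
  have hz3 : zetaR 3 < cseq 1 := by
    rw [cseq_one']
    nlinarith [zetaR_three_lt']
  refine ⟨cseq_one', cseq_even_le_one', fun x hx hx3 => ⟨cseq_odd_lt' x hx hx3, hz3⟩, ?_⟩
  intro x hx1
  rcases Nat.even_or_odd x with hx | hx
  · have := cseq_even_le_one' x hx
    rw [cseq_one']
    nlinarith
  · have hx3 : 3 ≤ x := by
      rcases hx with ⟨m, hm⟩; omega
    exact (cseq_odd_lt' x hx hx3).trans hz3
end
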